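/- Let n ≥ 2, τ = n − 1, e = n(n−1)/2, and let v = (V^{(1)},…,V^{(τ)}) ∈ ℝ^{nτ} be such that the nτ real numbers {V_i^{(k)} : 1 ≤ i ≤ n, 1 ≤ k ≤ τ} are algebraically independent over ℚ. Then the stacked voltage coefficient matrix A(v) ∈ ℝ^{nτ×e} has rank e; equivalently, the linear map y ↦ A(v)y on ℝ^e is injective, so for every i ∈ ℝ^{nτ} the equation i = A(v)y has at most one solution y ∈ ℝ^e. -/

import Mathlib

open Matrix BigOperators

/-- Edges of the complete graph on `Fin n`: ordered pairs `(i, j)` with `i < j`. -/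
abbrev CEdge (n : ℕ) := {p : Fin n × Fin n // p.1 < p.2}

/-- Incidence matrix of the complete graph on `Fin n`, each edge `(i, j)` (with `i < j`)
oriented from `i` to `j`:  `H i l = 1` if edge `l` leaves node `i`, `-1` if it enters `i`,
and `0` otherwise. -/
def incid (F : Type*) [Field F] (n : ℕ) : Matrix (Fin n) (CEdge n) F :=
  Matrix.of fun i l => if i = l.val.1 then 1 else if i = l.val.2 then -1 else 0

/-- Voltage coefficient matrix `Ã(V) = H ⬝ diag(Hᵀ V)`. -/
def Atilde {F : Type*} [Field F] {n : ℕ} (V : Fin n → F) : Matrix (Fin n) (CEdge n) F :=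
  incid F n * Matrix.diagonal ((incid F n)ᵀ *ᵥ V)

/-- Stacked voltage coefficient matrix `A(v)` for `τ` measurements `v 1, …, v τ`:
the row indexed by `(k, i)` is the `i`-th row of `Ã(V^(k))`. -/
def Astack {F : Type*} [Field F] {n τ : ℕ} (v : Fin τ → Fin n → F) :
    Matrix (Fin τ × Fin n) (CEdge n) F :=
  Matrix.of fun p l => Atilde (v p.1) p.2 l

/-- Rigidity matrix of the complete graph at the configuration `x = (x 1, …, x n)`,
`x i ∈ F^τ`: the row indexed by edge `(i, j)`, `i < j`, has the entries of `(x i − x j)ᵀ`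
in the `τ` columns of node `i`, the entries of `(x j − x i)ᵀ` in the `τ` columns of node `j`,
and zeros elsewhere. -/
def rigidityM {F : Type*} [Field F] {n τ : ℕ} (x : Fin n → Fin τ → F) :
    Matrix (CEdge n) (Fin n × Fin τ) F :=
  Matrix.of fun l p =>
    if p.1 = l.val.1 then x l.val.1 p.2 - x l.val.2 p.2
    else if p.1 = l.val.2 then x l.val.2 p.2 - x l.val.1 p.2
    else 0

lemma incid_sum {F : Type*} [Field F] {n : ℕ} (l : CEdge n) (f : Fin n → F) :
    ∑ j, incid F n j l * f j = f l.val.1 - f l.val.2 := by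
  have hne : l.val.1 ≠ l.val.2 := ne_of_lt l.prop
  have key : ∀ j : Fin n, incid F n j l * f j
      = (if l.val.1 = j then f j else 0) + (if l.val.2 = j then -f j else 0) := by
    intro j
    simp only [incid, Matrix.of_apply]
    by_cases h1 : j = l.val.1
    · subst h1
      simp [hne, Ne.symm hne]
    · by_cases h2 : j = l.val.2
      · subst h2
        simp [h1, Ne.symm h1]
      · simp [h1, h2, Ne.symm h1, Ne.symm h2]
  rw [Finset.sum_congr rfl fun j _ => key j, Finset.sum_add_distrib,
    Finset.sum_ite_eq, Finset.sum_ite_eq]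
  simp [sub_eq_add_neg]

lemma Astack_row {n τ : ℕ} (v : Fin τ → Fin n → ℝ) (y : CEdge n → ℝ)
    (k : Fin τ) (i : Fin n) :
    (Astack v *ᵥ y) (k, i)
      = ∑ l, incid ℝ n i l * ((v k l.val.1 - v k l.val.2) * y l) := by
  simp only [Matrix.mulVec, dotProduct, Astack, Atilde, Matrix.of_apply,
    Matrix.mul_diagonal, Matrix.mulVec, dotProduct, Matrix.transpose_apply]
  refine Finset.sum_congr rfl fun l _ => ?_
  rw [incid_sum l (v k)]
  ring

lemma affine_indep {n : ℕ} (hn : 2 ≤ n) (v : Fin (n - 1) → Fin n → ℝ)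
    (hgen : AlgebraicIndependent ℚ (fun p : Fin (n - 1) × Fin n => v p.1 p.2))
    (c : Fin n → ℝ) (h0 : ∑ j, c j = 0) (hk : ∀ k, ∑ j, c j * v k j = 0) :
    c = 0 := by
  have h1 : n - 1 + 1 = n := by omega
  set e : Fin (n - 1 + 1) ≃ Fin n := finCongr h1 with he
  set M : Matrix (Fin (n - 1 + 1)) (Fin (n - 1 + 1)) (MvPolynomial (Fin (n - 1) × Fin n) ℚ) :=
    Matrix.of fun j m => Fin.cases 1 (fun k => MvPolynomial.X (k, e j)) m with hM
  have hP : M.det ≠ 0 := by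
    intro h
    set q : Fin (n - 1) × Fin n → ℚ := fun p => ((p.2 : ℕ) : ℚ) ^ ((p.1 : ℕ) + 1) with hq
    have hv : (MvPolynomial.eval q) M.det = 0 := by rw [h]; simp
    rw [RingHom.map_det, RingHom.mapMatrix_apply] at hv
    have hMv : M.map (MvPolynomial.eval q)
        = Matrix.vandermonde (fun j : Fin (n - 1 + 1) => ((e j : ℕ) : ℚ)) := by
      funext j m
      induction m using Fin.cases with
      | zero => simp [hM, Matrix.vandermonde]
      | succ k => simp [hM, hq, Matrix.vandermonde]
    rw [hMv, Matrix.det_vandermonde_eq_zero_iff] at hv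
    obtain ⟨i, j, hij, hne⟩ := hv
    exact hne (e.injective (Fin.val_injective (Nat.cast_injective hij)))
  set w : Fin (n - 1) × Fin n → ℝ := fun p => v p.1 p.2 with hw
  have hinj : Function.Injective (MvPolynomial.aeval w : MvPolynomial _ ℚ →ₐ[ℚ] ℝ) :=
    algebraicIndependent_iff_injective_aeval.1 hgen
  set B : Matrix (Fin (n - 1 + 1)) (Fin (n - 1 + 1)) ℝ :=
    M.map (MvPolynomial.aeval w) with hB
  have hdetB : B.det ≠ 0 := by
    rw [hB, ← AlgHom.mapMatrix_apply, ← AlgHom.map_det]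
    intro h
    exact hP (hinj (by simpa using h))
  have hmv : Bᵀ *ᵥ (fun j => c (e j)) = 0 := by
    funext m
    induction m using Fin.cases with
    | zero =>
      have hentry : ∀ j, Bᵀ 0 j = 1 := by
        intro j; simp [hB, hM]
      simp only [Matrix.mulVec, dotProduct]
      simp only [Matrix.transpose_apply]
      calc ∑ j, B j 0 * c (e j) = ∑ j, c (e j) := by
            refine Finset.sum_congr rfl fun j _ => ?_
            have := hentry j; rw [Matrix.transpose_apply] at this; rw [this, one_mul]
        _ = ∑ j, c j := Equiv.sum_comp e c
        _ = 0 := h0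
    | succ k =>
      simp only [Matrix.mulVec, dotProduct, Matrix.transpose_apply]
      calc ∑ j, B j k.succ * c (e j) = ∑ j, c (e j) * v k (e j) := by
            refine Finset.sum_congr rfl fun j _ => ?_
            simp [hB, hM, hw, mul_comm]
        _ = ∑ j, c j * v k j := Equiv.sum_comp e (fun j => c j * v k j)
        _ = 0 := hk k
  have hc' : (fun j => c (e j)) = 0 :=
    Matrix.eq_zero_of_mulVec_eq_zero (by rwa [Matrix.det_transpose]) hmv
  funext j
  have := congrFun hc' (e.symm j)
  simpa using this

lemma key_zero {n : ℕ} (hn : 2 ≤ n) (v : Fin (n - 1) → Fin n → ℝ)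
    (hgen : AlgebraicIndependent ℚ (fun p : Fin (n - 1) × Fin n => v p.1 p.2))
    (y : CEdge n → ℝ) (hy : Astack v *ᵥ y = 0) : y = 0 := by
  funext l0
  obtain ⟨⟨a, b⟩, hab⟩ := l0
  set c : Fin n → ℝ := fun j => -∑ l, incid ℝ n a l * incid ℝ n j l * y l with hc
  have h0 : ∑ j, c j = 0 := by
    simp only [hc, Finset.sum_neg_distrib, neg_eq_zero]
    rw [Finset.sum_comm]
    refine Finset.sum_eq_zero fun l _ => ?_
    have : ∑ j, incid ℝ n a l * incid ℝ n j l * y l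
        = (incid ℝ n a l * y l) * ∑ j, incid ℝ n j l * (1 : ℝ) := by
      rw [Finset.mul_sum]; refine Finset.sum_congr rfl fun j _ => by ring
    rw [this, incid_sum l (fun _ => (1:ℝ))]
    simp
  have hks : ∀ k, ∑ j, c j * v k j = 0 := by
    intro k
    have hrow := congrFun hy (k, a)
    rw [Astack_row] at hrow
    simp only [Pi.zero_apply] at hrow
    have e1 : ∑ j, c j * v k j
        = -∑ j, ∑ l, incid ℝ n a l * incid ℝ n j l * y l * v k j := by
      rw [← Finset.sum_neg_distrib]
      refine Finset.sum_congr rfl fun j _ => ?_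
      rw [hc, neg_mul, Finset.sum_mul]
    rw [e1, Finset.sum_comm]
    have e2 : ∀ l : CEdge n, ∑ j, incid ℝ n a l * incid ℝ n j l * y l * v k j
        = incid ℝ n a l * ((v k l.val.1 - v k l.val.2) * y l) := by
      intro l
      have : ∑ j, incid ℝ n a l * incid ℝ n j l * y l * v k j
          = (incid ℝ n a l * y l) * ∑ j, incid ℝ n j l * v k j := by
        rw [Finset.mul_sum]; refine Finset.sum_congr rfl fun j _ => by ring
      rw [this, incid_sum l (v k)]; ring
    rw [Finset.sum_congr rfl fun l _ => e2 l, hrow, neg_zero]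
  have hc0 := affine_indep hn v hgen c h0 hks
  have hcb := congrFun hc0 b
  simp only [hc, Pi.zero_apply, neg_eq_zero] at hcb
  rw [Finset.sum_eq_single (⟨(a, b), hab⟩ : CEdge n)] at hcb
  · have h1 : incid ℝ n a (⟨(a, b), hab⟩ : CEdge n) = 1 := by simp [incid]
    have h2 : incid ℝ n b (⟨(a, b), hab⟩ : CEdge n) = -1 := by
      simp [incid, (ne_of_lt hab).symm]
    rw [h1, h2] at hcb
    simpa using hcb
  · intro l _ hl
    obtain ⟨⟨p, q⟩, hpq⟩ := l
    have hne : (⟨(p, q), hpq⟩ : CEdge n) ≠ ⟨(a, b), hab⟩ := hl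
    simp only [incid, Matrix.of_apply]
    have hab' : a < b := hab
    have hpq' : p < q := hpq
    by_cases h1 : a = p
    · by_cases h2 : b = q
      · exact absurd (by subst h1; subst h2; rfl) hne
      · have hbp : ¬b = p := fun h => absurd hab' (by rw [h1, h]; exact lt_irrefl p)
        simp [hbp, h2]
    · by_cases h3 : a = q
      · have hbp : ¬b = p := fun h =>
          absurd ((h ▸ hab').trans hpq') (by rw [h3]; exact lt_irrefl q)
        have hbq : ¬b = q := fun h => absurd hab' (by rw [h3, h]; exact lt_irrefl q)
        simp [hbp, hbq]
      · simp [h1, h3]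
  · intro h
    exact absurd (Finset.mem_univ _) h

def edgeEquiv (n : ℕ) : CEdge n ≃ Σ j : Fin n, Fin j.val where
  toFun l := ⟨l.val.2, ⟨l.val.1.val, l.prop⟩⟩
  invFun s := ⟨(⟨s.2.val, s.2.isLt.trans s.1.isLt⟩, s.1), s.2.isLt⟩
  left_inv l := by
    apply Subtype.ext
    exact Prod.ext rfl rfl
  right_inv s := by
    rcases s with ⟨j, m⟩
    rfl

lemma card_CEdge (n : ℕ) : Fintype.card (CEdge n) = n * (n - 1) / 2 := by
  rw [Fintype.card_congr (edgeEquiv n), Fintype.card_sigma]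
  simp only [Fintype.card_fin]
  have : ∑ x : Fin n, (x : ℕ) = ∑ i ∈ Finset.range n, i :=
    Fin.sum_univ_eq_sum_range (fun i => i) n
  rw [this, Finset.sum_range_id]

/-- with `τ = n − 1` generic real measurements, `A(v)` has full column rank
`e = n(n−1)/2`; equivalently `y ↦ A(v)y` is injective, so for every `i` the equation
`i = A(v)y` has at most one solution. -/
theorem stmt4 (n : ℕ) (hn : 2 ≤ n) (v : Fin (n - 1) → Fin n → ℝ)
    (hgen : AlgebraicIndependent ℚ (fun p : Fin (n - 1) × Fin n => v p.1 p.2)) :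
    (Astack v).rank = n * (n - 1) / 2 ∧
    Function.Injective (fun y : CEdge n → ℝ => Astack v *ᵥ y) ∧
    ∀ (i : Fin (n - 1) × Fin n → ℝ) (y y' : CEdge n → ℝ),
      i = Astack v *ᵥ y → i = Astack v *ᵥ y' → y = y' := by
  have hinjL : Function.Injective (Astack v).mulVecLin := by
    rw [← LinearMap.ker_eq_bot]
    apply LinearMap.ker_eq_bot'.mpr
    intro y hy
    exact key_zero hn v hgen y (by simpa using hy)
  have hinj : Function.Injective (fun y : CEdge n → ℝ => Astack v *ᵥ y) := by
    exact hinjL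
  refine ⟨?_, hinj, ?_⟩
  · rw [Matrix.rank, LinearMap.finrank_range_of_inj hinjL,
      Module.finrank_fintype_fun_eq_card, card_CEdge]
  · intro i y y' h h'
    exact hinj (show (fun y : CEdge n → ℝ => Astack v *ᵥ y) y = _ from (h.symm.trans h' : _))
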